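/- Let f : ℕ → ℂ and let z ∈ ℂ be such that the series ∑_{n≥0} |f_n| |z|^n converges. Then the Laplace–Borel transform recovers the ordinary generating function from the exponential generating function: ∫_{0}^{∞} F̂(t z) e^{-t} dt = ∑_{n≥0} f_n z^n, where F̂(w) = ∑_{n≥0} f_n w^n / n! (which converges for every w ∈ ℂ under the stated hypothesis). -/

import Mathlib

open MeasureTheory

lemma aux_integrable (n : ℕ) :
    IntegrableOn (fun t : ℝ => t ^ n * Real.exp (-t)) (Set.Ioi 0) := by
  have h := Real.GammaIntegral_convergent (s := (n : ℝ) + 1) (by positivity)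
  refine h.congr_fun (fun t ht => ?_) measurableSet_Ioi
  rw [add_sub_cancel_right]; beta_reduce; rw [Real.rpow_natCast, mul_comm]

lemma aux_integral (n : ℕ) :
    ∫ t in Set.Ioi (0 : ℝ), t ^ n * Real.exp (-t) = n.factorial := by
  have h := Real.Gamma_eq_integral (s := (n : ℝ) + 1) (by positivity)
  rw [Real.Gamma_nat_eq_factorial] at h
  rw [h]
  refine setIntegral_congr_fun measurableSet_Ioi (fun t ht => ?_)
  rw [add_sub_cancel_right, Real.rpow_natCast, mul_comm]

theorem laplace_borel_transform (f : ℕ → ℂ) (z : ℂ)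
    (hsum : Summable (fun n : ℕ => ‖f n‖ * ‖z‖ ^ n)) :
    (∫ t in Set.Ioi (0 : ℝ),
        (∑' n : ℕ, f n * ((t : ℂ) * z) ^ n / n.factorial) * (Real.exp (-t) : ℂ)) =
      ∑' n : ℕ, f n * z ^ n := by
  set F : ℕ → ℝ → ℂ := fun n t =>
    (f n * z ^ n / n.factorial) * (((t ^ n * Real.exp (-t) : ℝ) : ℂ)) with hF
  have hfac : ∀ n : ℕ, (0:ℝ) < n.factorial := fun n => by exact_mod_cast n.factorial_pos
  have hFeq : ∀ t : ℝ,
      (∑' n : ℕ, f n * ((t : ℂ) * z) ^ n / n.factorial) * (Real.exp (-t) : ℂ)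
        = ∑' n, F n t := by
    intro t
    rw [← tsum_mul_right]
    congr 1; funext n
    simp only [hF]
    push_cast
    ring
  have hint : ∀ n, Integrable (F n) (volume.restrict (Set.Ioi (0:ℝ))) := by
    intro n
    exact ((aux_integrable n).ofReal).const_mul _
  have hofReal : ∀ n : ℕ, (∫ t in Set.Ioi (0:ℝ), ((t ^ n * Real.exp (-t) : ℝ) : ℂ))
      = ((n.factorial : ℝ) : ℂ) := by
    intro n
    rw [← aux_integral n]
    exact integral_ofReal
  have hnorm : ∀ n, (∫ t in Set.Ioi (0:ℝ), ‖F n t‖)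
      = ‖f n * z ^ n / n.factorial‖ * n.factorial := by
    intro n
    have : ∀ t ∈ Set.Ioi (0:ℝ), ‖F n t‖ =
        ‖f n * z ^ n / n.factorial‖ * (t ^ n * Real.exp (-t)) := by
      intro t ht
      simp only [hF, norm_mul, Complex.norm_real, Real.norm_eq_abs, abs_mul]
      rw [abs_of_nonneg (pow_nonneg (le_of_lt ht) n), abs_of_nonneg (Real.exp_pos _).le]
    rw [setIntegral_congr_fun measurableSet_Ioi this, integral_const_mul, aux_integral]
  have hsum2 : Summable (fun n => ∫ t in Set.Ioi (0:ℝ), ‖F n t‖) := by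
    simp only [hnorm]
    refine hsum.of_nonneg_of_le (fun n => by positivity) (fun n => ?_)
    have hc : ‖((n.factorial : ℕ) : ℂ)‖ = (n.factorial : ℝ) := by simp
    rw [norm_div, norm_mul, norm_pow, hc, div_mul_cancel₀ _ (ne_of_gt (hfac n))]
  calc (∫ t in Set.Ioi (0 : ℝ),
        (∑' n : ℕ, f n * ((t : ℂ) * z) ^ n / n.factorial) * (Real.exp (-t) : ℂ))
      = ∫ t in Set.Ioi (0:ℝ), ∑' n, F n t := by
        exact setIntegral_congr_fun measurableSet_Ioi (fun t _ => hFeq t)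
    _ = ∑' n, ∫ t in Set.Ioi (0:ℝ), F n t :=
        (integral_tsum_of_summable_integral_norm hint hsum2).symm
    _ = ∑' n : ℕ, f n * z ^ n := by
        congr 1; funext n
        rw [hF]
        simp only
        rw [integral_const_mul, hofReal]
        have : ((n.factorial : ℂ)) ≠ 0 := by exact_mod_cast n.factorial_ne_zero
        push_cast
        field_simp
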